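/- For every integer n ≥ 2, L_n(1.1π/n) > 0, where L_n(x) = (18n+24)sin(x) - 18n·sin(x/2) - 29.1. -/

import Mathlib

open Real

set_option maxHeartbeats 1000000 in
theorem stmt_15 (n : ℕ) (hn : 2 ≤ n) :
    0 < (18 * n + 24) * Real.sin (1.1 * π / n)
        - 18 * n * Real.sin (1.1 * π / n / 2) - 29.1 := by
  have hπ1 : 3.141592 < π := Real.pi_gt_d6
  have hπ2 : π < 3.141593 := Real.pi_lt_d6
  have hπsq1 : 9.8696 < π^2 := by nlinarith
  have hπsq2 : π^2 < 9.86961 := by nlinarith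
  have hπ4 : π^4 < 97.41 := by nlinarith
  have hπ3lo : 31.006 < π^3 := by nlinarith
  have hπ3 : π^3 < 31.0063 := by nlinarith
  match n, hn with
  | 2, _ =>
    have e1 : Real.sin (1.1 * π / 2) = Real.cos (0.05 * π) := by
      rw [← Real.cos_neg, show (-(0.05*π)) = π/2 - 1.1*π/2 by ring,
        Real.cos_pi_div_two_sub]
    have e2 : Real.sin (1.1 * π / 2 / 2) = Real.cos (0.225 * π) := by
      rw [show (0.225*π) = π/2 - 1.1*π/2/2 by ring, Real.cos_pi_div_two_sub]
    have ha1 : |(0.05 * π : ℝ)| = 0.05 * π := abs_of_nonneg (by positivity)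
    have ha2 : |(0.225 * π : ℝ)| = 0.225 * π := abs_of_nonneg (by positivity)
    have hb1 := Real.cos_bound (x := 0.05 * π) (by rw [ha1]; nlinarith)
    have hb2 := Real.cos_bound (x := 0.225 * π) (by rw [ha2]; nlinarith)
    rw [ha1, abs_le] at hb1
    rw [ha2, abs_le] at hb2
    push_cast
    rw [e1, e2]
    nlinarith [hb1.1, hb2.2]
  | 3, _ =>
    have e1 : Real.sin (1.1 * π / 3) = Real.cos (π * (2/15)) := by
      rw [show (π * (2/15)) = π/2 - 1.1*π/3 by ring, Real.cos_pi_div_two_sub]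
    have ha1 : |(π * (2/15) : ℝ)| = π * (2/15) := abs_of_nonneg (by positivity)
    have ha2 : |(1.1 * π / 3 / 2 : ℝ)| = 1.1 * π / 3 / 2 := abs_of_nonneg (by positivity)
    have hb1 := Real.cos_bound (x := π * (2/15)) (by rw [ha1]; nlinarith)
    have hb2 := Real.sin_bound (x := 1.1 * π / 3 / 2) (by rw [ha2]; nlinarith)
    rw [ha1, abs_le] at hb1
    rw [ha2, abs_le] at hb2
    push_cast
    rw [e1]
    nlinarith [hb1.1, hb2.2]
  | (m + 4), _ =>
    set N : ℝ := ((m : ℝ) + 4) with hN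
    have hcast : ((m + 4 : ℕ) : ℝ) = N := by push_cast; ring
    have hN4 : (4:ℝ) ≤ N := by
      have : (0:ℝ) ≤ (m:ℝ) := Nat.cast_nonneg m
      linarith
    have hNpos : (0:ℝ) < N := by linarith
    set x : ℝ := 1.1 * π / N with hx
    have hxpos : 0 < x := by positivity
    have hnx : N * x = 1.1 * π := by rw [hx]; field_simp
    have hxle : x ≤ 0.864 := by
      rw [hx, div_le_iff₀ hNpos]
      nlinarith
    have hs2 : Real.sin (x / 2) < x / 2 := Real.sin_lt (by positivity)
    have hax : |x| = x := abs_of_nonneg hxpos.le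
    have hb1 := Real.sin_bound (x := x) (by rw [hax]; linarith)
    rw [hax, abs_le] at hb1
    have hs1 : x - x^3/6 - x^4 * (5/96) ≤ Real.sin x := by
      nlinarith [hb1.1, mul_nonneg (pow_pos hxpos 4).le (by linarith : (0:ℝ) ≤ 5/96 - x/100)]
    rw [hcast]
    have key : 0 < (18 * N + 24) * (x - x^3/6 - x^4 * (5/96)) - 18 * N * (x / 2) - 29.1 := by
      have h1 : 18 * N * x = 19.8 * π := by linarith [hnx]
      have h2 : 18 * N * x^3 = 19.8 * π * x^2 := by
        have h : 18 * N * x^3 = (18 * (N * x)) * x^2 := by ring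
        rw [h, hnx]; ring
      have h3 : 18 * N * x^4 = 19.8 * π * x^3 := by
        have h : 18 * N * x^4 = (18 * (N * x)) * x^3 := by ring
        rw [h, hnx]; ring
      have expand : (18 * N + 24) * (x - x^3/6 - x^4 * (5/96)) - 18 * N * (x / 2) - 29.1
          = 9.9 * π + 24 * x - 3.3 * π * x^2 - (4 + (19.8 * π) * (5/96)) * x^3
            - x^4 * (24 * 5/96) - 29.1 := by
        have h : (18 * N + 24) * (x - x^3/6 - x^4 * (5/96)) - 18 * N * (x / 2) - 29.1
            = (18*N*x)/2 + 24*x - (18*N*x^3)/6 - (18*N*x^4)*(5/96)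
              - 24*(x^3/6) - 24*(x^4*(5/96)) - 29.1 := by ring
        rw [h, h1, h2, h3]; ring
      rw [expand]
      have b1 : 3.3*π*x^2 ≤ 10.37*x^2 := by nlinarith [sq_nonneg x]
      have b2 : (4 + (19.8*π)*(5/96))*x^3 ≤ 7.24*x^3 := by nlinarith [pow_pos hxpos 3]
      have hxx : (0:ℝ) ≤ 0.864 - x := by linarith
      nlinarith [mul_nonneg hxx hxpos.le, mul_nonneg (mul_nonneg hxx hxpos.le) hxpos.le,
        mul_nonneg (mul_nonneg (mul_nonneg hxx hxpos.le) hxpos.le) hxpos.le,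
        pow_pos hxpos 4]
    have hNfact : (0:ℝ) < 18 * N := by linarith
    have t1 := mul_lt_mul_of_pos_left hs2 hNfact
    have t2 := mul_le_mul_of_nonneg_left hs1 (by linarith : (0:ℝ) ≤ 18 * N + 24)
    rw [← hx]
    linarith [t1, t2, key]
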